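/- Let F : (0,∞) → ℝ be continuous with F(t) = 1/t + O(t) as t → 0⁺ (i.e. t·F(t) − 1 = O(t²)). Define E(t) = exp(∫_{1/2}^t F(ξ) dξ) and, for x₁ ≥ 0, x(t) = x₁·E(t)/(1 + x₁·∫₀ᵗ E(ξ) dξ). Then x extends continuously to t = 0 with x(0) = 0, and lim_{t→0⁺} x(t)/t exists and is finite. -/

import Mathlib

open Real Filter Topology MeasureTheory Asymptotics

/-- For `F` continuous on `(0,∞)` with `F t = 1/t + O(t)` as `t → 0⁺`,
`E t = exp (∫_{1/2}^t F)` and `x₁ ≥ 0`, the function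
`x t = x₁ E t / (1 + x₁ ∫₀ᵗ E)` extends continuously to `0` with `x 0 = 0`,
and `x t / t` has a finite limit as `t → 0⁺`. -/
theorem stmt1 (F E x : ℝ → ℝ) (hF : ContinuousOn F (Set.Ioi 0))
    (hFasym : (fun t => t * F t - 1) =O[𝓝[>] (0:ℝ)] fun t => t^2)
    (hE : ∀ t, E t = Real.exp (∫ ξ in (1/2 : ℝ)..t, F ξ))
    (hInt : ∀ t ∈ Set.Ioi (0:ℝ), IntervalIntegrable E volume 0 t)
    (x₁ : ℝ) (hx₁ : 0 ≤ x₁)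
    (hx : ∀ t ∈ Set.Ioi (0:ℝ), x t = x₁ * E t / (1 + x₁ * ∫ ξ in (0:ℝ)..t, E ξ)) :
    Tendsto x (𝓝[>] 0) (𝓝 0) ∧
    ∃ L : ℝ, Tendsto (fun t => x t / t) (𝓝[>] 0) (𝓝 L) := by
  set G : ℝ → ℝ := fun t => F t - t⁻¹ with hGdef
  have hGcont : ContinuousOn G (Set.Ioi 0) := by
    apply hF.sub
    exact ContinuousOn.inv₀ continuousOn_id (fun t ht => ne_of_gt ht)
  -- eventual bound on G
  obtain ⟨C, hC⟩ := hFasym.bound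
  have hGbd : ∀ᶠ t in 𝓝[>] (0:ℝ), |G t| ≤ C * t := by
    filter_upwards [hC, self_mem_nhdsWithin] with t h1 h2
    have ht : (0:ℝ) < t := h2
    have hb : |t * F t - 1| ≤ C * t ^ 2 := by
      simpa [abs_of_pos ht, abs_of_pos (pow_pos ht 2)] using h1
    have hG : t * G t = t * F t - 1 := by
      simp only [hGdef]; field_simp
    calc |G t| = |t * G t| / t := by
            rw [abs_mul, abs_of_pos ht]; field_simp
      _ ≤ (C * t ^ 2) / t := by
            rw [hG]; exact (div_le_div_iff_of_pos_right ht).mpr hb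
      _ = C * t := by field_simp
  -- extract δ
  rw [eventually_nhdsWithin_iff, Metric.eventually_nhds_iff] at hGbd
  obtain ⟨ε, hε, hbd⟩ := hGbd
  set δ : ℝ := min (ε/2) (1/2) with hδdef
  have hδ0 : 0 < δ := lt_min (by linarith) (by norm_num)
  have hδhalf : δ ≤ 1/2 := min_le_right _ _
  have hbd' : ∀ t ∈ Set.Ioc 0 δ, |G t| ≤ |C| * δ := by
    intro t ⟨ht0, htδ⟩
    have h1 : dist t 0 < ε := by
      rw [Real.dist_eq, sub_zero, abs_of_pos ht0]
      exact lt_of_le_of_lt htδ (lt_of_le_of_lt (min_le_left _ _) (by linarith))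
    calc |G t| ≤ C * t := hbd h1 ht0
      _ ≤ |C| * δ := by
          have : C * t ≤ |C| * t := mul_le_mul_of_nonneg_right (le_abs_self C) ht0.le
          exact this.trans (mul_le_mul_of_nonneg_left htδ (abs_nonneg C))
  -- G interval integrable on [0, δ]
  have hGint1 : IntervalIntegrable G volume 0 δ := by
    rw [intervalIntegrable_iff_integrableOn_Ioc_of_le hδ0.le]
    have hmeas : AEStronglyMeasurable G (volume.restrict (Set.Ioc 0 δ)) :=
      (hGcont.mono (fun t ht => ht.1)).aestronglyMeasurable measurableSet_Ioc
    apply Integrable.mono' (g := fun _ => |C| * δ) (integrable_const _) hmeas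
    rw [ae_restrict_iff' measurableSet_Ioc]
    filter_upwards with t ht
    simpa using hbd' t ht
  -- G interval integrable on [δ, 1/2]
  have hGint2 : IntervalIntegrable G volume δ (1/2) := by
    apply ContinuousOn.intervalIntegrable
    apply hGcont.mono
    rw [Set.uIcc_of_le hδhalf]
    exact fun t ht => lt_of_lt_of_le hδ0 ht.1
  have hGint : IntervalIntegrable G volume 0 (1/2) := hGint1.trans hGint2
  set H : ℝ → ℝ := fun t => ∫ ξ in (1/2:ℝ)..t, G ξ with hHdef
  have hHtend : Tendsto H (𝓝[>] (0:ℝ)) (𝓝 (H 0)) := by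
    have h1 : ContinuousWithinAt (fun b => ∫ ξ in (1/2:ℝ)..b, G ξ) (Set.Icc 0 (1/2)) 0 := by
      apply intervalIntegral.continuousWithinAt_primitive (measure_singleton 0)
      have : min (1/2:ℝ) 0 = 0 := by norm_num
      rw [this]
      have : max (1/2:ℝ) (1/2:ℝ) = 1/2 := by norm_num
      rw [this]
      exact hGint
    have h2 := h1.tendsto
    refine h2.mono_left ?_
    rw [← nhdsWithin_Ioc_eq_nhdsGT (by norm_num : (0:ℝ) < 1/2)]
    exact nhdsWithin_mono _ Set.Ioc_subset_Icc_self
  -- formula for E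
  have hEeq : ∀ t ∈ Set.Ioi (0:ℝ), E t = 2 * t * Real.exp (H t) := by
    intro t ht
    have hsub : Set.uIcc (1/2:ℝ) t ⊆ Set.Ioi 0 := by
      intro y hy
      have := hy.1
      have hmin : (0:ℝ) < min (1/2) t := lt_min (by norm_num) ht
      exact lt_of_lt_of_le hmin this
    have hFint : IntervalIntegrable F volume (1/2) t := (hF.mono hsub).intervalIntegrable
    have hIint : IntervalIntegrable (fun ξ:ℝ => ξ⁻¹) volume (1/2) t :=
      ((ContinuousOn.inv₀ continuousOn_id (fun y hy => ne_of_gt hy)).mono hsub).intervalIntegrable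
    have hGint' : IntervalIntegrable G volume (1/2) t := (hGcont.mono hsub).intervalIntegrable
    have hsplit : (∫ ξ in (1/2:ℝ)..t, F ξ) = (∫ ξ in (1/2:ℝ)..t, ξ⁻¹) + H t := by
      rw [hHdef, ← intervalIntegral.integral_add hIint hGint']
      apply intervalIntegral.integral_congr
      intro ξ _
      simp [hGdef]
    rw [hE t, hsplit, integral_inv_of_pos (by norm_num) ht, Real.exp_add,
      Real.exp_log (div_pos ht (by norm_num))]
    ring
  -- primitive of E tends to 0
  set P : ℝ → ℝ := fun t => ∫ ξ in (0:ℝ)..t, E ξ with hPdef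
  have hPtend : Tendsto P (𝓝[>] (0:ℝ)) (𝓝 0) := by
    have h1 : ContinuousWithinAt (fun b => ∫ ξ in (0:ℝ)..b, E ξ) (Set.Icc 0 (1/2)) 0 := by
      apply intervalIntegral.continuousWithinAt_primitive (measure_singleton 0)
      have h0 : min (0:ℝ) 0 = 0 := by norm_num
      have h2 : max (0:ℝ) (1/2:ℝ) = 1/2 := by norm_num
      rw [h0, h2]
      exact hInt (1/2) (by norm_num)
    have h2 := h1.tendsto
    have h3 : (∫ ξ in (0:ℝ)..(0:ℝ), E ξ) = 0 := intervalIntegral.integral_same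
    rw [h3] at h2
    refine h2.mono_left ?_
    rw [← nhdsWithin_Ioc_eq_nhdsGT (by norm_num : (0:ℝ) < 1/2)]
    exact nhdsWithin_mono _ Set.Ioc_subset_Icc_self
  have hDtend : Tendsto (fun t => 1 + x₁ * P t) (𝓝[>] (0:ℝ)) (𝓝 1) := by
    have h := ((tendsto_const_nhds : Tendsto (fun _:ℝ => (1:ℝ)) (𝓝[>] (0:ℝ)) (𝓝 1)).add
      ((tendsto_const_nhds : Tendsto (fun _:ℝ => x₁) (𝓝[>] (0:ℝ)) (𝓝 x₁)).mul hPtend))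
    simpa using h
  have htid : Tendsto (fun t : ℝ => t) (𝓝[>] (0:ℝ)) (𝓝 0) :=
    tendsto_id.mono_left nhdsWithin_le_nhds
  have hexp : Tendsto (fun t => Real.exp (H t)) (𝓝[>] (0:ℝ)) (𝓝 (Real.exp (H 0))) :=
    (Real.continuous_exp.tendsto _).comp hHtend
  have hEtend : Tendsto E (𝓝[>] (0:ℝ)) (𝓝 0) := by
    have h1 : Tendsto (fun t => 2 * t * Real.exp (H t)) (𝓝[>] (0:ℝ)) (𝓝 (2 * 0 * Real.exp (H 0))) :=
      (tendsto_const_nhds.mul htid).mul hexp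
    have h2 : Tendsto (fun t => 2 * t * Real.exp (H t)) (𝓝[>] (0:ℝ)) (𝓝 0) := by
      simpa using h1
    apply h2.congr'
    filter_upwards [self_mem_nhdsWithin] with t ht
    exact (hEeq t ht).symm
  constructor
  · have h1 : Tendsto (fun t => x₁ * E t / (1 + x₁ * P t)) (𝓝[>] (0:ℝ)) (𝓝 (x₁ * 0 / 1)) :=
      (tendsto_const_nhds.mul hEtend).div hDtend one_ne_zero
    have h2 : Tendsto (fun t => x₁ * E t / (1 + x₁ * P t)) (𝓝[>] (0:ℝ)) (𝓝 0) := by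
      simpa using h1
    apply h2.congr'
    filter_upwards [self_mem_nhdsWithin] with t ht
    exact (hx t ht).symm
  · refine ⟨x₁ * (2 * Real.exp (H 0)) / 1, ?_⟩
    have h1 : Tendsto (fun t => x₁ * (2 * Real.exp (H t)) / (1 + x₁ * P t)) (𝓝[>] (0:ℝ))
        (𝓝 (x₁ * (2 * Real.exp (H 0)) / 1)) :=
      (tendsto_const_nhds.mul (tendsto_const_nhds.mul hexp)).div hDtend one_ne_zero
    apply h1.congr'
    filter_upwards [self_mem_nhdsWithin] with t ht
    have htne : (t:ℝ) ≠ 0 := ne_of_gt ht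
    rw [hx t ht, hEeq t ht]
    rw [div_div]
    have h3 : x₁ * (2 * t * Real.exp (H t)) = x₁ * (2 * Real.exp (H t)) * t := by ring
    rw [h3, mul_div_mul_right _ _ htne]
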